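/- Let G be the weighted graph with two vertices x, y and two parallel edges e₁, e₂ both oriented from x to y, with lengths r and 1−r where 0 < r < 1. Then the Jacobian J(G) is isomorphic to ℤ if r is irrational, and isomorphic to ℤ/nℤ if r = m/n with gcd(m,n) = 1. -/

import Mathlib

/-- A finite weighted (multi)graph with a fixed orientation of the edges:
vertex type `V`, edge type `E`, tail/head maps and a positive length function. -/
structure WGraph where
  V : Type
  E : Type
  [fV : Fintype V]
  [fE : Fintype E]
  [dV : DecidableEq V]
  [dE : DecidableEq E]
  tail : E → V
  head : E → V
  len : E → ℝ
  len_pos : ∀ e, 0 < len e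

attribute [instance] WGraph.fV WGraph.fE WGraph.dV WGraph.dE

namespace WGraph

variable (G : WGraph)

/-- Two vertices are adjacent if some edge joins them (in either direction). -/
def Adj (x y : G.V) : Prop :=
  ∃ e, (G.tail e = x ∧ G.head e = y) ∨ (G.tail e = y ∧ G.head e = x)

/-- A weighted graph is connected if any two vertices are joined by a walk. -/
def Connected : Prop := ∀ x y : G.V, Relation.ReflTransGen G.Adj x y

/-- The differential `d : C_0(G,ℝ) → C_1(G,ℝ)`, `(df)(e) = (f(e⁺) - f(e⁻))/ℓ(e)`. -/
noncomputable def d (f : G.V → ℝ) : G.E → ℝ :=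
  fun e => (f (G.head e) - f (G.tail e)) / G.len e

/-- The adjoint `d* : C_1(G,ℝ) → C_0(G,ℝ)`,
`(d*α)(x) = Σ_{e⁺ = x} α(e) - Σ_{e⁻ = x} α(e)`. -/
def dStar (α : G.E → ℝ) : G.V → ℝ := fun x =>
  (∑ e ∈ Finset.univ.filter fun e => G.head e = x, α e) -
    ∑ e ∈ Finset.univ.filter fun e => G.tail e = x, α e

/-- The inner product `⟨α,β⟩ = Σ_e α(e) β(e) ℓ(e)` on real 1-chains. -/
noncomputable def ip (α β : G.E → ℝ) : ℝ := ∑ e, α e * β e * G.len e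

/-- Real 1-cycles: the kernel of `d*`. -/
def IsCycle (α : G.E → ℝ) : Prop := ∀ x, G.dStar α x = 0

/-- Exact 1-chains: the image of `d`. -/
def IsExact (α : G.E → ℝ) : Prop := ∃ f : G.V → ℝ, α = G.d f

/-- A 1-form `ω = Σ ω_e de` (recorded by its coefficients) is harmonic if at every
vertex the incoming and outgoing coefficients sum to the same value. -/
def Harmonic (ω : G.E → ℝ) : Prop :=
  ∀ x, (∑ e ∈ Finset.univ.filter fun e => G.head e = x, ω e) =
    ∑ e ∈ Finset.univ.filter fun e => G.tail e = x, ω e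

/-- Integration of the 1-form `ω` along the 1-chain `α`: `∫_α ω = Σ_e ω_e α(e) ℓ(e)`. -/
noncomputable def intPair (ω α : G.E → ℝ) : ℝ := ∑ e, ω e * α e * G.len e

/-- `d*` on integral 1-chains. -/
def dStarZ (α : G.E → ℤ) : G.V → ℤ := fun x =>
  (∑ e ∈ Finset.univ.filter fun e => G.head e = x, α e) -
    ∑ e ∈ Finset.univ.filter fun e => G.tail e = x, α e

/-- Integral 1-cycles. -/
def IsCycleZ (α : G.E → ℤ) : Prop := ∀ x, G.dStarZ α x = 0

/-- `α ∈ im(d)_ℤ`: `α` is an integral 1-chain which is the differential of a real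
function on the vertices (a function with integer slopes). -/
def IsExactZ (α : G.E → ℤ) : Prop :=
  ∃ f : G.V → ℝ, ∀ e, (α e : ℝ) = G.d f e

/-- The subgroup `H_1(G,ℤ) ⊕ im(d)_ℤ` of `C_1(G,ℤ)`, i.e. the subgroup generated by
integral cycles together with integral exact chains. -/
def jacRel : AddSubgroup (G.E → ℤ) :=
  AddSubgroup.closure {α | G.IsCycleZ α ∨ G.IsExactZ α}

/-- The Jacobian group of a weighted graph: `J(G) = C_1(G,ℤ)/(H_1(G,ℤ) ⊕ im(d)_ℤ)`. -/
def Jac := (G.E → ℤ) ⧸ G.jacRel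

noncomputable instance : AddCommGroup G.Jac :=
  inferInstanceAs (AddCommGroup ((G.E → ℤ) ⧸ G.jacRel))

/-- Divisors of degree zero. -/
def Div0 : AddSubgroup (G.V → ℤ) where
  carrier := {D | ∑ x, D x = 0}
  add_mem' := by
    intro a b ha hb
    simp only [Set.mem_setOf_eq] at *
    simp [Finset.sum_add_distrib, ha, hb]
  zero_mem' := by simp
  neg_mem' := by
    intro a ha
    simp only [Set.mem_setOf_eq] at *
    simp [ha]

/-- `d*` as a group homomorphism on integral 1-chains. -/
def dStarZHom : (G.E → ℤ) →+ (G.V → ℤ) where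
  toFun := G.dStarZ
  map_zero' := by funext x; simp [dStarZ]
  map_add' := by
    intro a b
    funext x
    simp [dStarZ, Finset.sum_add_distrib]
    ring

/-- The subgroup `im(d)_ℤ` of `C_1(G,ℤ)`. -/
def imdZ : AddSubgroup (G.E → ℤ) where
  carrier := {α | G.IsExactZ α}
  add_mem' := by
    rintro a b ⟨f, hf⟩ ⟨g, hg⟩
    exact ⟨f + g, fun e => by
      simp only [Pi.add_apply, Int.cast_add, hf e, hg e, d]; ring⟩
  zero_mem' := ⟨0, fun e => by simp [d]⟩
  neg_mem' := by
    rintro a ⟨f, hf⟩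
    exact ⟨-f, fun e => by
      simp only [Pi.neg_apply, Int.cast_neg, hf e, d]; ring⟩

/-- Principal divisors: `Prin(G) = d*(im(d)_ℤ)`. -/
def Prin : AddSubgroup (G.V → ℤ) := G.imdZ.map G.dStarZHom

lemma sum_dStarZ (α : G.E → ℤ) : ∑ x, G.dStarZ α x = 0 := by
  simp only [dStarZ, Finset.sum_sub_distrib]
  rw [Finset.sum_fiberwise, Finset.sum_fiberwise]
  simp

/-- The degree-zero Picard group `Pic(G) = Div⁰(G)/Prin(G)`. -/
def PicZ := G.Div0 ⧸ (G.Prin.addSubgroupOf G.Div0)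

noncomputable instance : AddCommGroup G.PicZ :=
  inferInstanceAs (AddCommGroup (G.Div0 ⧸ (G.Prin.addSubgroupOf G.Div0)))

/-- The weighted graph obtained by deleting the edge `e₀`. -/
def delEdge (e₀ : G.E) : WGraph where
  V := G.V
  E := {e : G.E // e ≠ e₀}
  tail := fun e => G.tail e.1
  head := fun e => G.head e.1
  len := fun e => G.len e.1
  len_pos := fun e => G.len_pos e.1

/-- An edge is a bridge if deleting it disconnects the graph. -/
def IsBridge (e₀ : G.E) : Prop := ¬ (G.delEdge e₀).Connected

/-- The weighted graph obtained by deleting a vertex `z` (and all incident edges). -/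
def delVertex (z : G.V) : WGraph where
  V := {x : G.V // x ≠ z}
  E := {e : G.E // G.tail e ≠ z ∧ G.head e ≠ z}
  tail := fun e => ⟨G.tail e.1, e.2.1⟩
  head := fun e => ⟨G.head e.1, e.2.2⟩
  len := fun e => G.len e.1
  len_pos := fun e => G.len_pos e.1

open scoped Classical in
/-- The (discrete) potential kernel: `jKer z y` is the function `f` with `f(z) = 0`
and `Δf = δ_y - δ_z` (when such a function exists; it is unique on a
connected graph). -/
noncomputable def jKer (z y : G.V) : G.V → ℝ :=
  if h : ∃ f : G.V → ℝ, f z = 0 ∧ ∀ w, G.dStar (G.d f) w =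
      (if w = y then 1 else 0) - (if w = z then 1 else 0)
  then h.choose else 0

/-- Connectivity using only the edges in `S`. -/
def ConnectedOn (S : Finset G.E) : Prop :=
  ∀ x y : G.V, Relation.ReflTransGen
    (fun a b => ∃ e ∈ S, (G.tail e = a ∧ G.head e = b) ∨ (G.tail e = b ∧ G.head e = a)) x y

/-- A spanning tree: a spanning connected edge set with `#V - 1` edges. -/
def IsSpanningTree (T : Finset G.E) : Prop :=
  G.ConnectedOn T ∧ T.card + 1 = Fintype.card G.V

/-- The weight `w(T) = Π_{e ∉ T} ℓ(e)` of a spanning tree. -/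
noncomputable def wt (T : Finset G.E) : ℝ := ∏ e ∈ Finset.univ \ T, G.len e

open scoped Classical in
/-- `w(G) = Σ_T w(T)`, summed over all spanning trees. -/
noncomputable def wG : ℝ := ∑ T : Finset G.E, if G.IsSpanningTree T then G.wt T else 0

open scoped Classical in
/-- The Foster coefficient `F(e) = (1/w(G)) Σ_{T : e ∉ T} w(T)`. -/
noncomputable def foster (e : G.E) : ℝ :=
  (1 / G.wG) * ∑ T : Finset G.E, if G.IsSpanningTree T ∧ e ∉ T then G.wt T else 0

open scoped Classical in
/-- The fundamental cycle `α_{T,e}`: the unique 1-cycle supported on `T ∪ {e}` taking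
the value `1` on `e`; by convention it is `0` when no such cycle exists
(e.g. when `e ∈ T`). -/
noncomputable def fundCycle (T : Finset G.E) (e : G.E) : G.E → ℝ :=
  if h : ∃ α : G.E → ℝ, G.IsCycle α ∧ α e = 1 ∧ ∀ f, f ∉ T → f ≠ e → α f = 0
  then h.choose else 0

end WGraph

/-- The weighted graph with two vertices `x = 0`, `y = 1` and two parallel edges,
both oriented from `x` to `y`, of lengths `r` and `1 - r`. -/
def twoEdgeGraph (r : ℝ) (h0 : 0 < r) (h1 : r < 1) : WGraph where
  V := Fin 2
  E := Fin 2
  tail := fun _ => 0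
  head := fun _ => 1
  len := fun e => if e = 0 then r else 1 - r
  len_pos := by
    intro e
    show 0 < (if e = 0 then r else 1 - r)
    split
    · exact h0
    · linarith

def sum2 : (Fin 2 → ℤ) →+ ℤ where
  toFun := fun α => α 0 + α 1
  map_zero' := rfl
  map_add' := fun a b => by simp [Pi.add_apply]; ring

lemma sum2_surj : Function.Surjective sum2 := fun k => ⟨![k, 0], by simp [sum2]⟩

variable (r : ℝ) (h0 : 0 < r) (h1 : r < 1)

lemma cycZ_iff (α : Fin 2 → ℤ) :
    (twoEdgeGraph r h0 h1).IsCycleZ α ↔ α 0 + α 1 = 0 := by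
  constructor
  · intro h
    have := h (1 : Fin 2)
    simp only [WGraph.dStarZ, twoEdgeGraph] at this
    simp [Finset.filter_true_of_mem, Fin.sum_univ_two] at this
    exact (Fin.sum_univ_two α).symm.trans this
  · intro h x
    fin_cases x <;>
      simp only [WGraph.dStarZ, twoEdgeGraph] <;>
      simp [Finset.filter_eq_empty_iff, Finset.filter_true_of_mem, Fin.sum_univ_two] <;>
      exact (Fin.sum_univ_two α).trans h

lemma exactZ_rel {α : Fin 2 → ℤ}
    (h : (twoEdgeGraph r h0 h1).IsExactZ α) :
    (α 0 : ℝ) * r = (α 1 : ℝ) * (1 - r) := by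
  obtain ⟨f, hf⟩ := h
  have ha := hf (0 : Fin 2)
  have hb := hf (1 : Fin 2)
  simp only [WGraph.d, twoEdgeGraph] at ha hb
  norm_num at ha hb
  have hr : r ≠ 0 := ne_of_gt h0
  have h1r : (1 : ℝ) - r ≠ 0 := by linarith
  rw [ha, hb]
  field_simp

lemma exactZ_of_rel {α : Fin 2 → ℤ}
    (h : (α 0 : ℝ) * r = (α 1 : ℝ) * (1 - r)) :
    (twoEdgeGraph r h0 h1).IsExactZ α := by
  have key : ∃ f : Fin 2 → ℝ, ∀ e : Fin 2,
      (α e : ℝ) = (f 1 - f 0) / (if e = 0 then r else 1 - r) := by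
    refine ⟨![0, (α 0 : ℝ) * r], fun e => ?_⟩
    have he : e = 0 ∨ e = 1 := by omega
    rcases he with he | he <;> subst he <;> simp
    · field_simp
    · have h1r : (1 : ℝ) - r ≠ 0 := by linarith
      field_simp
      linarith [h]
  exact key

lemma cyc_isCycleZ : (twoEdgeGraph r h0 h1).IsCycleZ ![1, -1] :=
  (cycZ_iff r h0 h1 ![1, -1]).2 (by decide)

lemma mem_jacRel_of_cycle {α : Fin 2 → ℤ} (h : (twoEdgeGraph r h0 h1).IsCycleZ α) :
    α ∈ (twoEdgeGraph r h0 h1).jacRel :=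
  AddSubgroup.subset_closure (Or.inl h)

lemma mem_jacRel_of_exact {α : Fin 2 → ℤ} (h : (twoEdgeGraph r h0 h1).IsExactZ α) :
    α ∈ (twoEdgeGraph r h0 h1).jacRel :=
  AddSubgroup.subset_closure (Or.inr h)

lemma jacRel_le {K : AddSubgroup (Fin 2 → ℤ)}
    (hc : ∀ α : Fin 2 → ℤ, (twoEdgeGraph r h0 h1).IsCycleZ α → α ∈ K)
    (he : ∀ α : Fin 2 → ℤ, (twoEdgeGraph r h0 h1).IsExactZ α → α ∈ K) :
    (twoEdgeGraph r h0 h1).jacRel ≤ K := by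
  refine (AddSubgroup.closure_le K).2 ?_
  rintro α (h | h)
  · exact hc α h
  · exact he α h

lemma jacRel_eq_irr (hr : Irrational r) :
    (twoEdgeGraph r h0 h1).jacRel = sum2.ker := by
  apply le_antisymm
  · refine jacRel_le r h0 h1 ?_ ?_
    · intro α hc
      exact AddMonoidHom.mem_ker.2 ((cycZ_iff r h0 h1 α).1 hc)
    · intro α he
      have hrel := exactZ_rel r h0 h1 he
      have hsum : α 0 + α 1 = 0 := by
        by_contra hs
        have hs' : ((α 0 : ℝ) + α 1) ≠ 0 := by
          intro hz
          apply hs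
          exact_mod_cast (by push_cast; linarith : ((α 0 + α 1 : ℤ) : ℝ) = 0)
        have hq : r = ((((α 1 : ℚ) / ((α 0 : ℚ) + α 1)) : ℚ) : ℝ) := by
          push_cast
          rw [eq_div_iff hs']
          nlinarith [hrel]
        exact hr ⟨_, hq.symm⟩
      exact AddMonoidHom.mem_ker.2 hsum
  · suffices hs : ∀ α : Fin 2 → ℤ, α ∈ sum2.ker → α ∈ (twoEdgeGraph r h0 h1).jacRel by
      exact hs
    intro α hα
    have hsum : α 0 + α 1 = 0 := AddMonoidHom.mem_ker.1 hα
    have hrepr : α = α 0 • (![1, -1] : Fin 2 → ℤ) := by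
      funext e
      have he : e = 0 ∨ e = 1 := by omega
      rcases he with he | he <;> subst he <;>
        simp [Pi.smul_apply, smul_eq_mul] <;> omega
    rw [hrepr]
    exact zsmul_mem (mem_jacRel_of_cycle r h0 h1 (cyc_isCycleZ r h0 h1)) _

lemma jacRel_eq_rat (m n : ℕ) (hn : 0 < n) (hco : Nat.Coprime m n)
    (hr : r = (m : ℝ) / n) :
    (twoEdgeGraph r h0 h1).jacRel =
      ((Int.castAddHom (ZMod n)).comp sum2).ker := by
  have hn' : (n : ℝ) ≠ 0 := Nat.cast_ne_zero.2 hn.ne'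
  have hm : 0 < m := by
    by_contra h
    have hm0 : m = 0 := by omega
    rw [hm0] at hr
    simp at hr
    rw [hr] at h0
    exact lt_irrefl 0 h0
  have hmn : m < n := by
    by_contra h
    have h2 : (1 : ℝ) ≤ (m : ℝ) / n := by
      rw [le_div_iff₀ (by positivity)]
      have : (n : ℝ) ≤ m := by exact_mod_cast Nat.le_of_not_lt h
      linarith
    rw [← hr] at h2; linarith
  have hker : ∀ α : Fin 2 → ℤ,
      α ∈ ((Int.castAddHom (ZMod n)).comp sum2).ker ↔ (n : ℤ) ∣ α 0 + α 1 := by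
    intro α
    rw [AddMonoidHom.mem_ker]
    simp only [AddMonoidHom.comp_apply, Int.coe_castAddHom]
    exact ZMod.intCast_zmod_eq_zero_iff_dvd _ _
  apply le_antisymm
  · refine jacRel_le r h0 h1 ?_ ?_
    · intro α hc
      exact (hker α).2 (by rw [(cycZ_iff r h0 h1 α).1 hc]; exact dvd_zero _)
    · intro α he
      have hrel := exactZ_rel r h0 h1 he
      rw [hr] at hrel
      have hz : (α 0 + α 1) * (m : ℤ) = α 1 * n := by
        have hR : ((α 0 + α 1) * (m : ℤ) : ℝ) = ((α 1 * (n : ℤ) : ℤ) : ℝ) := by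
          push_cast
          field_simp at hrel
          nlinarith [hrel]
        exact_mod_cast hR
      have hco' : IsCoprime (n : ℤ) (m : ℤ) :=
        Nat.isCoprime_iff_coprime.2 hco.symm
      exact (hker α).2 (hco'.dvd_of_dvd_mul_right ⟨α 1, by linarith [hz]⟩)
  · suffices hs : ∀ α : Fin 2 → ℤ, α ∈ ((Int.castAddHom (ZMod n)).comp sum2).ker →
        α ∈ (twoEdgeGraph r h0 h1).jacRel by
      exact hs
    intro α hα
    obtain ⟨t, ht⟩ := (hker α).1 hα
    have hg : (twoEdgeGraph r h0 h1).IsExactZ ![(n : ℤ) - m, (m : ℤ)] := by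
      apply exactZ_of_rel r h0 h1
      rw [hr]
      show (((n : ℤ) - m : ℤ) : ℝ) * _ = ((m : ℤ) : ℝ) * _
      push_cast
      field_simp
    have hrepr : α = t • (![(n : ℤ) - m, (m : ℤ)] : Fin 2 → ℤ)
        + (α 0 - t * ((n : ℤ) - m)) • (![1, -1] : Fin 2 → ℤ) := by
      funext e
      have he : e = 0 ∨ e = 1 := by omega
      rcases he with he | he <;> subst he <;>
        simp [Pi.smul_apply, smul_eq_mul]
      linear_combination ht
    rw [hrepr]
    exact add_mem
      (zsmul_mem (mem_jacRel_of_exact r h0 h1 hg) _)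
      (zsmul_mem (mem_jacRel_of_cycle r h0 h1 (cyc_isCycleZ r h0 h1)) _)

/-- For the two-vertex banana graph with edge lengths `r` and
`1 - r` (`0 < r < 1`): the Jacobian is `ℤ` if `r` is irrational, and `ℤ/nℤ` if
`r = m/n` in lowest terms. -/
theorem jacobian_twoEdgeGraph (r : ℝ) (h0 : 0 < r) (h1 : r < 1) :
    (Irrational r → Nonempty ((twoEdgeGraph r h0 h1).Jac ≃+ ℤ)) ∧
    (∀ m n : ℕ, 0 < n → Nat.Coprime m n → r = (m : ℝ) / n →
      Nonempty ((twoEdgeGraph r h0 h1).Jac ≃+ ZMod n)) := by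
  constructor
  · intro hr
    haveI : IsAddCommutative ((twoEdgeGraph r h0 h1).E → ℤ) :=
      inferInstanceAs (IsAddCommutative (Fin 2 → ℤ))
    let φ : ((twoEdgeGraph r h0 h1).E → ℤ) →+ ℤ := sum2
    have hφ : Function.Surjective φ := sum2_surj
    have hJ : (twoEdgeGraph r h0 h1).jacRel = φ.ker := jacRel_eq_irr r h0 h1 hr
    exact ⟨(QuotientAddGroup.quotientAddEquivOfEq hJ).trans
      (QuotientAddGroup.quotientKerEquivOfSurjective φ hφ)⟩
  · intro m n hn hco hr
    have hsurj : Function.Surjective ((Int.castAddHom (ZMod n)).comp sum2) :=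
      (ZMod.intCast_surjective).comp sum2_surj
    haveI : IsAddCommutative ((twoEdgeGraph r h0 h1).E → ℤ) :=
      inferInstanceAs (IsAddCommutative (Fin 2 → ℤ))
    let φ : ((twoEdgeGraph r h0 h1).E → ℤ) →+ ZMod n := (Int.castAddHom (ZMod n)).comp sum2
    have hφ : Function.Surjective φ := hsurj
    have hJ : (twoEdgeGraph r h0 h1).jacRel = φ.ker := jacRel_eq_rat r h0 h1 m n hn hco hr
    exact ⟨(QuotientAddGroup.quotientAddEquivOfEq hJ).trans
      (QuotientAddGroup.quotientKerEquivOfSurjective φ hφ)⟩
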